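/- The function k(x:r) = √(1−r²)/(π(1−x²)√(r²−x²)) on the interval (−r, r), with 0 < r < 1, is a probability density: ∫_{−r}^{r} k(x:r) dx = 1. -/

import Mathlib

open Real

theorem konno_density_integrates_to_one (r : ℝ) (hr0 : 0 < r) (hr1 : r < 1) :
    ∫ x in (-r)..r,
      Real.sqrt (1 - r^2) / (Real.pi * (1 - x^2) * Real.sqrt (r^2 - x^2)) = 1 := by
  have hc2 : (0:ℝ) < 1 - r^2 := by nlinarith
  set c := Real.sqrt (1 - r^2) with hc
  have hcpos : 0 < c := Real.sqrt_pos.2 hc2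
  have hcsq : c^2 = 1 - r^2 := Real.sq_sqrt hc2.le
  set F : ℝ → ℝ := fun x => Real.arcsin (c * x / (r * Real.sqrt (1 - x^2))) / Real.pi with hF
  set f : ℝ → ℝ := fun x => c / (Real.pi * (1 - x^2) * Real.sqrt (r^2 - x^2)) with hf
  have hrn : -r ≤ r := by linarith
  have hx1 : ∀ x ∈ Set.Icc (-r) r, 0 < 1 - x^2 := by
    intro x hx; nlinarith [hx.1, hx.2]
  have hcontF : ContinuousOn F (Set.Icc (-r) r) := by
    apply ContinuousOn.div_const
    apply Real.continuous_arcsin.comp_continuousOn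
    apply ContinuousOn.div
    · fun_prop
    · fun_prop
    · intro x hx
      exact ne_of_gt (mul_pos hr0 (Real.sqrt_pos.2 (hx1 x hx)))
  have hderiv : ∀ x ∈ Set.Ioo (-r) r, HasDerivAt F (f x) x := by
    intro x hx
    have hx1' : 0 < 1 - x^2 := hx1 x (Set.mem_Icc.2 ⟨hx.1.le, hx.2.le⟩)
    have hx2' : 0 < r^2 - x^2 := by nlinarith [hx.1, hx.2]
    set s := Real.sqrt (1 - x^2) with hs
    have hspos : 0 < s := Real.sqrt_pos.2 hx1'
    have hssq : s^2 = 1 - x^2 := Real.sq_sqrt hx1'.le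
    set t := Real.sqrt (r^2 - x^2) with ht
    have htpos : 0 < t := Real.sqrt_pos.2 hx2'
    have htsq : t^2 = r^2 - x^2 := Real.sq_sqrt hx2'.le
    -- derivative of inner sqrt
    have hS : HasDerivAt (fun y => Real.sqrt (1 - y^2)) (-x / s) x := by
      have h1 : HasDerivAt (fun y : ℝ => 1 - y^2) (-(2*x)) x := by
        simpa using ((hasDerivAt_pow 2 x).const_sub 1)
      have h2 := (Real.hasDerivAt_sqrt (ne_of_gt hx1')).comp x h1
      refine h2.congr_deriv ?_
      field_simp [hs]
      rw [← hs]
    -- derivative of inner function g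
    have hg : HasDerivAt (fun y => c * y / (r * Real.sqrt (1 - y^2)))
        (c / (r * (1 - x^2) * s)) x := by
      have hnum : HasDerivAt (fun y : ℝ => c * y) c x := by
        simpa using (hasDerivAt_id x).const_mul c
      have hden : HasDerivAt (fun y => r * Real.sqrt (1 - y^2)) (r * (-x / s)) x :=
        hS.const_mul r
      have hdenne : r * s ≠ 0 := ne_of_gt (mul_pos hr0 hspos)
      have := hnum.div hden hdenne
      refine this.congr_deriv ?_
      rw [← hs, ← hssq]
      field_simp
      linear_combination hssq
    -- value of g at x and its bounds
    have hgx : |c * x / (r * s)| < 1 := by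
      rw [abs_div, div_lt_one (by positivity)]
      rw [abs_mul, abs_mul, abs_of_pos hcpos, abs_of_pos hr0, abs_of_pos hspos]
      have h1 : (c * |x|)^2 < (r * s)^2 := by
        have : x^2 = |x|^2 := (sq_abs x).symm
        nlinarith [sq_abs x, hcsq, hssq, hx2']
      nlinarith [abs_nonneg x, mul_pos hr0 hspos,
        mul_nonneg hcpos.le (abs_nonneg x)]
    have hgne1 : c * x / (r * s) ≠ 1 := by
      intro h; rw [h] at hgx; simp at hgx
    have hgnen1 : c * x / (r * s) ≠ -1 := by
      intro h; rw [h] at hgx; simp at hgx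
    have harc := (Real.hasDerivAt_arcsin hgnen1 hgne1).comp x hg
    have hsqrt1 : Real.sqrt (1 - (c * x / (r * s))^2) = t / (r * s) := by
      have h1 : 1 - (c * x / (r * s))^2 = (t / (r * s))^2 := by
        rw [div_pow, div_pow, mul_pow, mul_pow, hssq, htsq, hcsq]
        field_simp
        ring
      rw [h1, Real.sqrt_sq (by positivity)]
    have : HasDerivAt F
        ((1 / Real.sqrt (1 - (c * x / (r * s))^2) * (c / (r * (1 - x^2) * s))) / Real.pi) x :=
      HasDerivAt.div_const harc Real.pi
    convert this using 1
    rw [hsqrt1, hf, ← hssq]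
    have hπ := Real.pi_pos
    field_simp
    rw [← ht]
    linear_combination t * hssq
  have hnonneg : ∀ x ∈ Set.Ioo (-r) r, 0 ≤ f x := by
    intro x hx
    have hx1' : 0 < 1 - x^2 := hx1 x (Set.mem_Icc.2 ⟨hx.1.le, hx.2.le⟩)
    have hx2' : 0 < r^2 - x^2 := by nlinarith [hx.1, hx.2]
    have hπ := Real.pi_pos
    rw [hf]
    positivity
  have hint : IntervalIntegrable f MeasureTheory.volume (-r) r := by
    apply intervalIntegral.intervalIntegrable_deriv_of_nonneg
    · rwa [Set.uIcc_of_le hrn]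
    · rw [min_eq_left hrn, max_eq_right hrn]; exact hderiv
    · rw [min_eq_left hrn, max_eq_right hrn]; exact hnonneg
  have key : ∫ x in (-r)..r, f x = F r - F (-r) :=
    intervalIntegral.integral_eq_sub_of_hasDeriv_right_of_le hrn hcontF
      (fun x hx => (hderiv x hx).hasDerivWithinAt) hint
  have hFr : F r = 1 / 2 := by
    show Real.arcsin (c * r / (r * Real.sqrt (1 - r^2))) / Real.pi = 1 / 2
    have h : c * r / (r * Real.sqrt (1 - r^2)) = 1 := by
      rw [← hc]
      field_simp [hr0.ne', hcpos.ne']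
    rw [h, Real.arcsin_one]
    field_simp
  have hFnr : F (-r) = -(1 / 2) := by
    show Real.arcsin (c * (-r) / (r * Real.sqrt (1 - (-r)^2))) / Real.pi = -(1 / 2)
    have h1 : (1 : ℝ) - (-r)^2 = 1 - r^2 := by ring
    rw [h1]
    have h : c * (-r) / (r * Real.sqrt (1 - r^2)) = -1 := by
      rw [← hc]
      field_simp [hr0.ne', hcpos.ne']
    rw [h, Real.arcsin_neg, Real.arcsin_one]
    field_simp
  calc ∫ x in (-r)..r,
      Real.sqrt (1 - r^2) / (Real.pi * (1 - x^2) * Real.sqrt (r^2 - x^2))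
      = ∫ x in (-r)..r, f x := by rw [hf, ← hc]
    _ = F r - F (-r) := key
    _ = 1 := by rw [hFr, hFnr]; norm_num
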